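/- arXiv:1508.02340 — 2 statements merged into one kernel-verified Lean document; each statement's English description precedes it below -/
import Mathlib

section
/- Let ν : ℝ≥0 → ℝ be positive, continuous, integrable on [0,∞), and suppose there is K > 0 with |ν'(t)| ≤ K·ν(t) for all t. If x ∈ W¹₂(ℝ₊,ℝⁿ;ν) (i.e. ∫‖x‖²ν < ∞ and ∫‖ẋ‖²ν < ∞), then the function f(t) = ‖x(t)‖²·ν(t) belongs to W¹₁(ℝ₊,ℝ) and consequently ‖x(t)‖²·ν(t) → 0 as t → ∞. -/
open MeasureTheory Filter

/-- Let `ν` be a positive, continuous, integrable weight on `[0,∞)` with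
`|ν'(t)| ≤ K·ν(t)`. If `x ∈ W¹₂(ℝ₊, ℝⁿ; ν)`, then `f(t) = ‖x(t)‖² ν(t)`
belongs to `W¹₁(ℝ₊, ℝ)` (both `f` and its derivative
`f'(t) = 2⟨x(t), ẋ(t)⟩ ν(t) + ‖x(t)‖² ν'(t)` are integrable) and
consequently `‖x(t)‖² ν(t) → 0` as `t → ∞`. -/
theorem sq_norm_mul_weight_W11_and_tendsto_zero {n : ℕ}
    (ν ν' : ℝ → ℝ) (K : ℝ) (hK : 0 < K)
    (hνpos : ∀ t ≥ (0 : ℝ), 0 < ν t)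
    (hνcont : ContinuousOn ν (Set.Ici 0))
    (hνint : IntegrableOn ν (Set.Ici 0))
    (hνderiv : ∀ t ≥ (0 : ℝ), HasDerivAt ν (ν' t) t)
    (hνbound : ∀ t ≥ (0 : ℝ), |ν' t| ≤ K * ν t)
    (x x' : ℝ → EuclideanSpace ℝ (Fin n))
    (hxderiv : ∀ t ≥ (0 : ℝ), HasDerivAt x (x' t) t)
    (hx2 : IntegrableOn (fun t => ‖x t‖ ^ 2 * ν t) (Set.Ici 0))
    (hx'2 : IntegrableOn (fun t => ‖x' t‖ ^ 2 * ν t) (Set.Ici 0)) :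
    IntegrableOn (fun t => ‖x t‖ ^ 2 * ν t) (Set.Ici 0) ∧
    IntegrableOn
      (fun t => 2 * (inner ℝ (x t) (x' t) : ℝ) * ν t + ‖x t‖ ^ 2 * ν' t)
      (Set.Ici 0) ∧
    Tendsto (fun t => ‖x t‖ ^ 2 * ν t) atTop (nhds 0) := by
  set F : ℝ → ℝ := fun t => ‖x t‖ ^ 2 * ν t with hF
  set F' : ℝ → ℝ := fun t => 2 * (inner ℝ (x t) (x' t) : ℝ) * ν t + ‖x t‖ ^ 2 * ν' t with hF'
  -- the derivative
  have hderiv : ∀ t ≥ (0 : ℝ), HasDerivAt F (F' t) t := by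
    intro t ht
    have h1 : HasDerivAt (fun s => (inner ℝ (x s) (x s) : ℝ))
        ((inner ℝ (x t) (x' t) : ℝ) + (inner ℝ (x' t) (x t) : ℝ)) t :=
      (hxderiv t ht).inner ℝ (hxderiv t ht)
    have h2 : HasDerivAt (fun s => ‖x s‖ ^ 2)
        (2 * (inner ℝ (x t) (x' t) : ℝ)) t := by
      have : ((inner ℝ (x t) (x' t) : ℝ) + (inner ℝ (x' t) (x t) : ℝ))
          = 2 * (inner ℝ (x t) (x' t) : ℝ) := by
        rw [real_inner_comm (x' t) (x t)]; ring
      rw [← this]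
      simp only [← real_inner_self_eq_norm_sq]
      exact h1
    exact h2.mul (hνderiv t ht)
  -- measurability of F'
  have hmeas : AEStronglyMeasurable F' (volume.restrict (Set.Ici (0:ℝ))) := by
    apply (stronglyMeasurable_deriv F).aestronglyMeasurable.congr
    filter_upwards [ae_restrict_mem measurableSet_Ici] with t ht
    exact ((hderiv t ht).deriv)
  -- integrability of F'
  have hbound : IntegrableOn
      (fun t => (‖x t‖ ^ 2 * ν t + ‖x' t‖ ^ 2 * ν t) + K * (‖x t‖ ^ 2 * ν t))
      (Set.Ici 0) := (hx2.add hx'2).add (hx2.const_mul K)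
  have hint' : IntegrableOn F' (Set.Ici 0) := by
    refine Integrable.mono hbound hmeas ?_
    filter_upwards [ae_restrict_mem measurableSet_Ici] with t ht
    have hν := (hνpos t ht).le
    have h0 : (0:ℝ) ≤ ‖x t‖ ^ 2 * ν t := by positivity
    have h0' : (0:ℝ) ≤ ‖x' t‖ ^ 2 * ν t := by positivity
    have hA : |2 * (inner ℝ (x t) (x' t) : ℝ) * ν t|
        ≤ ‖x t‖ ^ 2 * ν t + ‖x' t‖ ^ 2 * ν t := by
      have hi : |(inner ℝ (x t) (x' t) : ℝ)| ≤ ‖x t‖ * ‖x' t‖ :=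
        abs_real_inner_le_norm _ _
      have h2 : 2 * (‖x t‖ * ‖x' t‖) ≤ ‖x t‖ ^ 2 + ‖x' t‖ ^ 2 := by
        have := two_mul_le_add_sq ‖x t‖ ‖x' t‖; linarith
      calc |2 * (inner ℝ (x t) (x' t) : ℝ) * ν t|
          = 2 * |(inner ℝ (x t) (x' t) : ℝ)| * ν t := by
            rw [abs_mul, abs_mul, abs_of_nonneg hν]; simp
        _ ≤ (‖x t‖ ^ 2 + ‖x' t‖ ^ 2) * ν t := by
            apply mul_le_mul_of_nonneg_right _ hν
            calc 2 * |(inner ℝ (x t) (x' t) : ℝ)| ≤ 2 * (‖x t‖ * ‖x' t‖) := by linarith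
              _ ≤ ‖x t‖ ^ 2 + ‖x' t‖ ^ 2 := h2
        _ = ‖x t‖ ^ 2 * ν t + ‖x' t‖ ^ 2 * ν t := by ring
    have hB : |‖x t‖ ^ 2 * ν' t| ≤ K * (‖x t‖ ^ 2 * ν t) := by
      rw [abs_mul, abs_of_nonneg (by positivity : (0:ℝ) ≤ ‖x t‖ ^ 2)]
      calc ‖x t‖ ^ 2 * |ν' t| ≤ ‖x t‖ ^ 2 * (K * ν t) :=
            mul_le_mul_of_nonneg_left (hνbound t ht) (by positivity)
        _ = K * (‖x t‖ ^ 2 * ν t) := by ring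
    have : |F' t| ≤ (‖x t‖ ^ 2 * ν t + ‖x' t‖ ^ 2 * ν t) + K * (‖x t‖ ^ 2 * ν t) :=
      (abs_add_le _ _).trans (add_le_add hA hB)
    have hKpos : (0:ℝ) ≤ K * (‖x t‖ ^ 2 * ν t) := by positivity
    calc ‖F' t‖ = |F' t| := rfl
      _ ≤ (‖x t‖ ^ 2 * ν t + ‖x' t‖ ^ 2 * ν t) + K * (‖x t‖ ^ 2 * ν t) := this
      _ ≤ ‖(‖x t‖ ^ 2 * ν t + ‖x' t‖ ^ 2 * ν t) + K * (‖x t‖ ^ 2 * ν t)‖ :=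
          le_abs_self _
  refine ⟨hx2, hint', ?_⟩
  exact tendsto_zero_of_hasDerivAt_of_integrableOn_Ioi
    (fun t ht => hderiv t (le_of_lt ht))
    (hint'.mono_set Set.Ioi_subset_Ici_self)
    (hx2.mono_set Set.Ioi_subset_Ici_self)
end

section
/- Let ν be a positive continuous integrable weight with |ν'(t)| ≤ K·ν(t). If x ∈ W¹₂(ℝ₊,ℝⁿ;ν) and y ∈ W¹₂(ℝ₊,ℝⁿ;ν⁻¹), then h(t) = ⟨x(t), y(t)⟩ belongs to W¹₁(ℝ₊,ℝ) and hence ⟨x(t),y(t)⟩ → 0 as t → ∞. -/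
open MeasureTheory Filter

private lemma inner_integrable_aux {n : ℕ} (ν : ℝ → ℝ)
    (hνpos : ∀ t ≥ (0 : ℝ), 0 < ν t)
    (f g : ℝ → EuclideanSpace ℝ (Fin n))
    (hm : AEStronglyMeasurable (fun t => (inner ℝ (f t) (g t) : ℝ))
      (volume.restrict (Set.Ici 0)))
    (hf2 : IntegrableOn (fun t => ‖f t‖ ^ 2 * ν t) (Set.Ici 0))
    (hg2 : IntegrableOn (fun t => ‖g t‖ ^ 2 * (ν t)⁻¹) (Set.Ici 0)) :
    IntegrableOn (fun t => (inner ℝ (f t) (g t) : ℝ)) (Set.Ici 0) := by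
  apply Integrable.mono' ((hf2.add hg2).div_const 2) hm
  filter_upwards [ae_restrict_mem measurableSet_Ici] with t ht
  have hv : 0 < ν t := hνpos t ht
  have h1 : ‖(inner ℝ (f t) (g t) : ℝ)‖ ≤ ‖f t‖ * ‖g t‖ := norm_inner_le_norm _ _
  refine h1.trans ?_
  have h2 : (0:ℝ) ≤ (ν t)⁻¹ * (‖f t‖ * ν t - ‖g t‖) ^ 2 :=
    mul_nonneg (inv_pos.mpr hv).le (sq_nonneg _)
  have h3 : ν t * (ν t)⁻¹ = 1 := mul_inv_cancel₀ hv.ne'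
  have h4 : (ν t)⁻¹ * (‖f t‖ * ν t) ^ 2 = ‖f t‖ ^ 2 * ν t := by
    field_simp
  have h5 : ν t * (ν t)⁻¹ * (‖f t‖ * ‖g t‖) = ‖f t‖ * ‖g t‖ := by rw [h3]; ring
  simp only [Pi.add_apply]
  nlinarith [h2, h4, h5]

private lemma tendsto_zero_of_integrable_of_tendsto {h : ℝ → ℝ} {L : ℝ}
    (hint : IntegrableOn h (Set.Ici 0)) (hL : Tendsto h atTop (nhds L)) :
    L = 0 := by
  by_contra hL0
  have hLpos : 0 < ‖L‖ := norm_pos_iff.mpr hL0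
  have hpos : 0 < ‖L‖ / 2 := by positivity
  have hev : ∀ᶠ t in atTop, ‖L‖ / 2 ≤ ‖h t‖ :=
    hL.norm.eventually (eventually_ge_nhds (show ‖L‖/2 < ‖L‖ by linarith))
  obtain ⟨T, hT⟩ := hev.exists_forall_of_atTop
  set T' := max T 0 with hT'
  have hint' : IntegrableOn h (Set.Ici T') :=
    hint.mono_set (Set.Ici_subset_Ici.mpr (le_max_right _ _))
  have hc : Integrable (fun _ : ℝ => ‖L‖ / 2) (volume.restrict (Set.Ici T')) := by
    apply Integrable.mono hint' aestronglyMeasurable_const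
    filter_upwards [ae_restrict_mem measurableSet_Ici] with t ht
    have := hT t (le_trans (le_max_left _ _) ht)
    simpa [abs_of_pos hpos] using this
  rw [integrable_const_iff] at hc
  rcases hc with hc | hc
  · exact absurd hc hpos.ne'
  · have := hc.measure_univ_lt_top; simp [Real.volume_Ici] at this

/-- Let `ν` be a positive, continuous, integrable weight with `|ν'(t)| ≤ K·ν(t)`.
If `x ∈ W¹₂(ℝ₊, ℝⁿ; ν)` and `y ∈ W¹₂(ℝ₊, ℝⁿ; ν⁻¹)`, then
`h(t) = ⟨x(t), y(t)⟩` belongs to `W¹₁(ℝ₊, ℝ)` (both `h` and its derivative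
`h'(t) = ⟨ẋ(t), y(t)⟩ + ⟨x(t), ẏ(t)⟩` are integrable) and hence
`⟨x(t), y(t)⟩ → 0` as `t → ∞`. -/
theorem inner_W11_and_tendsto_zero {n : ℕ}
    (ν ν' : ℝ → ℝ) (K : ℝ) (hK : 0 < K)
    (hνpos : ∀ t ≥ (0 : ℝ), 0 < ν t)
    (hνcont : ContinuousOn ν (Set.Ici 0))
    (hνint : IntegrableOn ν (Set.Ici 0))
    (hνderiv : ∀ t ≥ (0 : ℝ), HasDerivAt ν (ν' t) t)
    (hνbound : ∀ t ≥ (0 : ℝ), |ν' t| ≤ K * ν t)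
    (x x' y y' : ℝ → EuclideanSpace ℝ (Fin n))
    (hxderiv : ∀ t ≥ (0 : ℝ), HasDerivAt x (x' t) t)
    (hyderiv : ∀ t ≥ (0 : ℝ), HasDerivAt y (y' t) t)
    (hx2 : IntegrableOn (fun t => ‖x t‖ ^ 2 * ν t) (Set.Ici 0))
    (hx'2 : IntegrableOn (fun t => ‖x' t‖ ^ 2 * ν t) (Set.Ici 0))
    (hy2 : IntegrableOn (fun t => ‖y t‖ ^ 2 * (ν t)⁻¹) (Set.Ici 0))
    (hy'2 : IntegrableOn (fun t => ‖y' t‖ ^ 2 * (ν t)⁻¹) (Set.Ici 0)) :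
    IntegrableOn (fun t => (inner ℝ (x t) (y t) : ℝ)) (Set.Ici 0) ∧
    IntegrableOn
      (fun t => (inner ℝ (x' t) (y t) : ℝ) + (inner ℝ (x t) (y' t) : ℝ))
      (Set.Ici 0) ∧
    Tendsto (fun t => (inner ℝ (x t) (y t) : ℝ)) atTop (nhds 0) := by
  -- continuity / measurability
  have hxc : ContinuousOn x (Set.Ici 0) := fun t ht =>
    (hxderiv t ht).continuousAt.continuousWithinAt
  have hyc : ContinuousOn y (Set.Ici 0) := fun t ht =>
    (hyderiv t ht).continuousAt.continuousWithinAt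
  have hxm : AEStronglyMeasurable x (volume.restrict (Set.Ici 0)) :=
    hxc.aestronglyMeasurable measurableSet_Ici
  have hym : AEStronglyMeasurable y (volume.restrict (Set.Ici 0)) :=
    hyc.aestronglyMeasurable measurableSet_Ici
  have hx'm : AEStronglyMeasurable x' (volume.restrict (Set.Ici 0)) := by
    refine (stronglyMeasurable_deriv x).aestronglyMeasurable.congr ?_
    filter_upwards [ae_restrict_mem measurableSet_Ici] with t ht
    exact ((hxderiv t ht).deriv).symm ▸ rfl
  have hy'm : AEStronglyMeasurable y' (volume.restrict (Set.Ici 0)) := by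
    refine (stronglyMeasurable_deriv y).aestronglyMeasurable.congr ?_
    filter_upwards [ae_restrict_mem measurableSet_Ici] with t ht
    exact ((hyderiv t ht).deriv).symm ▸ rfl
  -- the three integrabilities
  have hI : IntegrableOn (fun t => (inner ℝ (x t) (y t) : ℝ)) (Set.Ici 0) :=
    inner_integrable_aux ν hνpos x y (hxm.inner hym) hx2 hy2
  have hI1 : IntegrableOn (fun t => (inner ℝ (x' t) (y t) : ℝ)) (Set.Ici 0) :=
    inner_integrable_aux ν hνpos x' y (hx'm.inner hym) hx'2 hy2
  have hI2 : IntegrableOn (fun t => (inner ℝ (x t) (y' t) : ℝ)) (Set.Ici 0) :=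
    inner_integrable_aux ν hνpos x y' (hxm.inner hy'm) hx2 hy'2
  refine ⟨hI, hI1.add hI2, ?_⟩
  -- derivative of h
  set h : ℝ → ℝ := fun t => (inner ℝ (x t) (y t) : ℝ) with hh
  set h' : ℝ → ℝ := fun t => (inner ℝ (x' t) (y t) : ℝ) + (inner ℝ (x t) (y' t) : ℝ)
    with hh'
  have hderiv : ∀ t ≥ (0:ℝ), HasDerivAt h (h' t) t := by
    intro t ht
    have := ((hxderiv t ht).inner ℝ (hyderiv t ht))
    simpa [hh, hh', add_comm] using this
  have hI' : IntegrableOn h' (Set.Ici 0) := hI1.add hI2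
  have hI'Ioi : IntegrableOn h' (Set.Ioi 0) := hI'.mono_set Set.Ioi_subset_Ici_self
  -- FTC: h t = h 0 + ∫ 0..t h'
  have hFTC : ∀ t ≥ (0:ℝ), h t = h 0 + ∫ s in (0:ℝ)..t, h' s := by
    intro t ht
    have hsub : Set.uIcc (0:ℝ) t ⊆ Set.Ici 0 := by
      rw [Set.uIcc_of_le ht]; exact Set.Icc_subset_Ici_self
    have : ∫ s in (0:ℝ)..t, h' s = h t - h 0 :=
      intervalIntegral.integral_eq_sub_of_hasDerivAt
        (fun s hs => hderiv s (hsub hs)) ((hI'.mono_set hsub).intervalIntegrable)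
    linarith [this]
  have hlim : Tendsto (fun t => h 0 + ∫ s in (0:ℝ)..t, h' s) atTop
      (nhds (h 0 + ∫ s in Set.Ioi 0, h' s)) :=
    tendsto_const_nhds.add
      (intervalIntegral_tendsto_integral_Ioi 0 hI'Ioi tendsto_id)
  have hlim' : Tendsto h atTop (nhds (h 0 + ∫ s in Set.Ioi 0, h' s)) := by
    refine hlim.congr' ?_
    filter_upwards [eventually_ge_atTop (0:ℝ)] with t ht
    exact (hFTC t ht).symm
  have hL0 : h 0 + ∫ s in Set.Ioi 0, h' s = 0 :=
    tendsto_zero_of_integrable_of_tendsto hI hlim'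
  rw [hL0] at hlim'
  exact hlim'
end
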